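/- If the system (1) has #I distinct solutions x_1, ..., x_N (N = #I), then the set X = {x_1, ..., x_N} is a correct (poised) set for Lagrange interpolation by polynomials of total degree ≤ m, i.e., the evaluation map from span{x^β : β ∈ I} to K^X is bijective. -/

import Mathlib

open Finset Matrix

/-- Total degree of a multi-index. -/
def mdeg {n : ℕ} (α : Fin n → ℕ) : ℕ := ∑ i, α i

/-- The set `I = {α ∈ ℤ₊ⁿ : |α| ≤ m}` of multi-indices of total degree at most `m`. -/
def Idx (n m : ℕ) : Finset (Fin n → ℕ) :=
  (Fintype.piFinset fun _ => Finset.range (m + 1)).filter fun α => mdeg α ≤ m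

/-- `I` is a lower set of multi-indices. -/
def IsLower {n : ℕ} (I : Finset (Fin n → ℕ)) : Prop :=
  ∀ β ∈ I, ∀ γ : Fin n → ℕ, (∀ i, γ i ≤ β i) → γ ∈ I

/-- `α` belongs to the border `J` of the lower set `I`. -/
def InBorder {n : ℕ} (I : Finset (Fin n → ℕ)) (α : Fin n → ℕ) : Prop :=
  α ∉ I ∧ ∃ β ∈ I, ∃ i : Fin n, α = β + Pi.single i 1

/-- The multiplication matrix `A_i`: its row indexed by `β ∈ I` is the standard basis
vector at `β + e_i` if `β + e_i ∈ I`, and is `(a_{β+e_i,γ})_{γ∈I}` otherwise. -/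
def multMat {K : Type*} [Field K] {n : ℕ} (I : Finset (Fin n → ℕ))
    (a : (Fin n → ℕ) → (Fin n → ℕ) → K) (i : Fin n) : Matrix ↥I ↥I K :=
  fun β γ =>
    if (β : Fin n → ℕ) + Pi.single i 1 ∈ I then
      (if (γ : Fin n → ℕ) = (β : Fin n → ℕ) + Pi.single i 1 then 1 else 0)
    else a ((β : Fin n → ℕ) + Pi.single i 1) γ

/-- The monomial vector `v(x) = (x^β)_{β ∈ I}`. -/
def monVec {K : Type*} [Field K] {n : ℕ} (I : Finset (Fin n → ℕ)) (x : Fin n → K) :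
    ↥I → K :=
  fun β => ∏ i, x i ^ (β : Fin n → ℕ) i

/-- `x` is a solution of the system (1): `x^α = Σ_{β∈I} a_{α,β} x^β` for all `|α| = m+1`. -/
def IsSol {K : Type*} [Field K] {n : ℕ} (m : ℕ)
    (a : (Fin n → ℕ) → (Fin n → ℕ) → K) (x : Fin n → K) : Prop :=
  ∀ α : Fin n → ℕ, mdeg α = m + 1 →
    ∏ i, x i ^ α i = ∑ β ∈ Idx n m, a α β * ∏ i, x i ^ β i

/-- `x` is a solution of the system for a general lower set `I` with border `J`. -/
def IsSolB {K : Type*} [Field K] {n : ℕ} (I : Finset (Fin n → ℕ))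
    (a : (Fin n → ℕ) → (Fin n → ℕ) → K) (x : Fin n → K) : Prop :=
  ∀ α : Fin n → ℕ, InBorder I α →
    ∏ i, x i ^ α i = ∑ β ∈ I, a α β * ∏ i, x i ^ β i

/-- A square matrix is diagonalizable (semisimple). -/
def Diagonalizable {K : Type*} [Field K] {ι : Type*} [Fintype ι] [DecidableEq ι]
    (A : Matrix ι ι K) : Prop :=
  ∃ P : Matrix ι ι K, IsUnit P.det ∧ (P⁻¹ * A * P).IsDiag

/-- The polynomial `P_α = x^α − Σ_{β∈I} a_{α,β} x^β`. -/
noncomputable def Pb {K : Type*} [Field K] {n : ℕ} (I : Finset (Fin n → ℕ))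
    (a : (Fin n → ℕ) → (Fin n → ℕ) → K) (α : Fin n → ℕ) : MvPolynomial (Fin n) K :=
  MvPolynomial.monomial (Finsupp.equivFunOnFinite.symm α) 1 -
    ∑ β ∈ I, MvPolynomial.C (a α β) * MvPolynomial.monomial (Finsupp.equivFunOnFinite.symm β) 1

/-- The ideal generated by the polynomials `P_α`, `α ∈ J`. -/
noncomputable def PIdeal {K : Type*} [Field K] {n : ℕ} (I : Finset (Fin n → ℕ))
    (a : (Fin n → ℕ) → (Fin n → ℕ) → K) : Ideal (MvPolynomial (Fin n) K) :=
  Ideal.span {p | ∃ α : Fin n → ℕ, InBorder I α ∧ p = Pb I a α}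

lemma mem_Idx_iff {n m : ℕ} {β : Fin n → ℕ} : β ∈ Idx n m ↔ mdeg β ≤ m := by
  constructor
  · exact fun h => (Finset.mem_filter.mp h).2
  · intro h
    refine Finset.mem_filter.mpr ⟨Fintype.mem_piFinset.mpr fun i => Finset.mem_range.mpr ?_, h⟩
    have : β i ≤ mdeg β := Finset.single_le_sum (f := β) (fun _ _ => Nat.zero_le _) (mem_univ i)
    omega

lemma mdeg_add_single {n : ℕ} (β : Fin n → ℕ) (i : Fin n) :
    mdeg (β + Pi.single i 1) = mdeg β + 1 := by
  simp [mdeg, Finset.sum_add_distrib, Fintype.sum_pi_single']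

lemma pow_add_single {K : Type*} [Field K] {n : ℕ} (x : Fin n → K) (β : Fin n → ℕ) (i : Fin n) :
    ∏ k, x k ^ (β + Pi.single i 1 : Fin n → ℕ) k = x i * ∏ k, x k ^ β k := by
  have : ∀ k, x k ^ (β + Pi.single i 1 : Fin n → ℕ) k
      = x k ^ β k * x k ^ Pi.single i (1 : ℕ) k := by
    intro k; rw [Pi.add_apply, pow_add]
  rw [Finset.prod_congr rfl fun k _ => this k, Finset.prod_mul_distrib]
  have h2 : ∏ k, x k ^ Pi.single i (1 : ℕ) k = x i := by
    rw [Finset.prod_eq_single i]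
    · simp
    · intro k _ hk; rw [Pi.single_eq_of_ne hk, pow_zero]
    · simp
  rw [h2, mul_comm]

/-- The eigenvector property: `A_i v(x) = x_i v(x)` for every solution `x`. -/
lemma multMat_mulVec_monVec {K : Type*} [Field K] {n m : ℕ}
    (a : (Fin n → ℕ) → (Fin n → ℕ) → K) (x : Fin n → K) (hx : IsSol m a x) (i : Fin n) :
    multMat (Idx n m) a i *ᵥ monVec (Idx n m) x = x i • monVec (Idx n m) x := by
  funext β
  simp only [mulVec, dotProduct, multMat, monVec, Pi.smul_apply, smul_eq_mul]
  by_cases h : (β : Fin n → ℕ) + Pi.single i 1 ∈ Idx n m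
  · simp only [if_pos h]
    have : ∀ γ : ↥(Idx n m),
        ((if (γ : Fin n → ℕ) = (β : Fin n → ℕ) + Pi.single i 1 then (1:K) else 0) *
          ∏ k, x k ^ (γ : Fin n → ℕ) k)
        = if γ = (⟨(β : Fin n → ℕ) + Pi.single i 1, h⟩ : ↥(Idx n m)) then
            (∏ k, x k ^ ((β : Fin n → ℕ) + Pi.single i 1 : Fin n → ℕ) k) else 0 := by
      intro γ
      by_cases hγ : (γ : Fin n → ℕ) = (β : Fin n → ℕ) + Pi.single i 1
      · rw [if_pos hγ, if_pos (Subtype.ext hγ), one_mul, hγ]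
      · rw [if_neg hγ, if_neg (fun hc => hγ (congrArg Subtype.val hc)), zero_mul]
    rw [Finset.sum_congr rfl fun γ _ => this γ, Finset.sum_ite_eq' Finset.univ,
      if_pos (Finset.mem_univ _), pow_add_single]
  · simp only [if_neg h]
    have hdeg : mdeg ((β : Fin n → ℕ) + Pi.single i 1) = m + 1 := by
      have h1 : mdeg (β : Fin n → ℕ) ≤ m := mem_Idx_iff.mp β.2
      have h2 : ¬ mdeg ((β : Fin n → ℕ) + Pi.single i 1) ≤ m := fun hc => h (mem_Idx_iff.mpr hc)
      rw [mdeg_add_single] at h2 ⊢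
      omega
    have := (hx _ hdeg).symm
    rw [pow_add_single] at this
    rw [← this]
    exact Finset.sum_coe_sort (Idx n m) fun γ => a ((β : Fin n → ℕ) + Pi.single i 1) γ *
      ∏ k, x k ^ γ k

/-- Joint eigenvectors with pairwise distinct eigenvalue tuples and nonzero are
such that any finitely supported dependence relation is trivial. -/
lemma joint_eig_indep_aux {K : Type*} [Field K] {ι : Type*} [Fintype ι] {N n : ℕ}
    (A : Fin n → Matrix ι ι K) (v : Fin N → ι → K) (μ : Fin N → Fin n → K)
    (heig : ∀ j i, A i *ᵥ v j = μ j i • v j) (hv : ∀ j, v j ≠ 0)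
    (hμ : Function.Injective μ) :
    ∀ (S : Finset (Fin N)) (g : Fin N → K), (∀ j ∉ S, g j = 0) →
      ∑ j, g j • v j = 0 → ∀ j, g j = 0 := by
  intro S
  induction S using Finset.strongInduction with
  | _ S ih =>
    intro g hsupp hsum j0
    by_cases hj0 : j0 ∈ S
    · by_cases hone : ∃ j1 ∈ S, j1 ≠ j0
      · obtain ⟨j1, hj1S, hj1⟩ := hone
        obtain ⟨i, hi⟩ : ∃ i, μ j0 i ≠ μ j1 i := by
          by_contra hcon; push_neg at hcon
          exact hj1 (hμ (funext fun i => (hcon i).symm))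
        have h1 : ∑ j, (g j * μ j i) • v j = 0 := by
          have heq : ∑ j, (g j * μ j i) • v j = (A i).mulVecLin (∑ j, g j • v j) := by
            rw [map_sum]
            refine Finset.sum_congr rfl fun j _ => ?_
            rw [_root_.map_smul, Matrix.mulVecLin_apply, heig j i, smul_smul]
          rw [heq, hsum, map_zero]
        have h2 : ∑ j, (g j * μ j1 i) • v j = 0 := by
          have heq : ∑ j, (g j * μ j1 i) • v j = μ j1 i • (∑ j, g j • v j) := by
            rw [Finset.smul_sum]
            refine Finset.sum_congr rfl fun j _ => ?_
            rw [smul_smul, mul_comm (μ j1 i)]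
          rw [heq, hsum, smul_zero]
        have hsum' : ∑ j, (g j * (μ j i - μ j1 i)) • v j = 0 := by
          calc ∑ j, (g j * (μ j i - μ j1 i)) • v j
              = ∑ j, ((g j * μ j i) • v j - (g j * μ j1 i) • v j) := by
                refine Finset.sum_congr rfl fun j _ => ?_
                rw [mul_sub, sub_smul]
            _ = ∑ j, (g j * μ j i) • v j - ∑ j, (g j * μ j1 i) • v j :=
                Finset.sum_sub_distrib _ _
            _ = 0 := by rw [h1, h2, sub_zero]
        have hsupp' : ∀ j ∉ S.erase j1, g j * (μ j i - μ j1 i) = 0 := by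
          intro j hj
          rw [Finset.mem_erase, not_and_or, not_not] at hj
          rcases hj with h | h
          · rw [h, sub_self, mul_zero]
          · rw [hsupp j h, zero_mul]
        have := ih (S.erase j1) (Finset.erase_ssubset hj1S)
          (fun j => g j * (μ j i - μ j1 i)) hsupp' hsum' j0
        rcases mul_eq_zero.mp this with h | h
        · exact h
        · exact absurd (sub_eq_zero.mp h) hi
      · push_neg at hone
        have : ∑ j, g j • v j = g j0 • v j0 := by
          rw [Finset.sum_eq_single j0]
          · intro j _ hj
            by_cases hjS : j ∈ S
            · exact absurd (hone j hjS) hj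
            · rw [hsupp j hjS, zero_smul]
          · intro h; exact absurd (Finset.mem_univ j0) h
        rw [this] at hsum
        rcases smul_eq_zero.mp hsum with h | h
        · exact h
        · exact absurd h (hv j0)
    · exact hsupp j0 hj0

/-- If the system has `#I` distinct solutions, then the set of these solutions is a
correct (poised) set for Lagrange interpolation by polynomials of total degree `≤ m`:
the evaluation map from `span{x^β : β ∈ I}` to `K^X` is bijective. -/
theorem stmt_19 {K : Type*} [Field K] {n m N : ℕ} (hN : N = (Idx n m).card)
    (a : (Fin n → ℕ) → (Fin n → ℕ) → K) (x : Fin N → (Fin n → K)) (hinj : Function.Injective x)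
    (hsol : ∀ j, IsSol m a (x j)) :
    Function.Bijective fun (c : ↥(Idx n m) → K) (j : Fin N) =>
      ∑ β : ↥(Idx n m), c β * ∏ i, (x j) i ^ (β : Fin n → ℕ) i := by
  classical
  set v : Fin N → (↥(Idx n m) → K) := fun j => monVec (Idx n m) (x j) with hv_def
  -- each v j is a joint eigenvector and nonzero
  have hv0 : ∀ j, v j ≠ 0 := by
    intro j hc
    have h0 : (0 : Fin n → ℕ) ∈ Idx n m := by
      refine mem_Idx_iff.mpr ?_
      simp [mdeg]
    have := congrFun hc ⟨0, h0⟩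
    simp [hv_def, monVec] at this
  have heig : ∀ j i, multMat (Idx n m) a i *ᵥ v j = x j i • v j := fun j i =>
    multMat_mulVec_monVec a (x j) (hsol j) i
  have hindep : LinearIndependent K v := by
    rw [Fintype.linearIndependent_iff]
    intro g hg j
    exact joint_eig_indep_aux (multMat (Idx n m) a) v x heig hv0 hinj
      Finset.univ g (fun j hj => absurd (Finset.mem_univ j) hj) hg j
  -- pack as a square matrix over ↥(Idx n m)
  have hcard : Fintype.card (Fin N) = Fintype.card ↥(Idx n m) := by
    rw [Fintype.card_fin, Fintype.card_coe, hN]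
  let e : Fin N ≃ ↥(Idx n m) := Fintype.equivOfCardEq hcard
  let M : Matrix ↥(Idx n m) ↥(Idx n m) K := fun β γ => v (e.symm β) γ
  have hMli : LinearIndependent K (fun β => M β) := by
    have : (fun β => M β) = v ∘ e.symm := rfl
    rw [this]
    exact hindep.comp e.symm e.symm.injective
  have hMunit : IsUnit M := Matrix.linearIndependent_rows_iff_isUnit.mp hMli
  have hMbij : Function.Bijective M.mulVec :=
    ⟨Matrix.mulVec_injective_iff_isUnit.mpr hMunit,
     Matrix.mulVec_surjective_iff_isUnit.mpr hMunit⟩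
  have hkey : (fun (c : ↥(Idx n m) → K) (j : Fin N) =>
      ∑ β : ↥(Idx n m), c β * ∏ i, (x j) i ^ (β : Fin n → ℕ) i)
      = (fun w : ↥(Idx n m) → K => w ∘ e) ∘ M.mulVec := by
    funext c
    funext j
    simp only [Function.comp_apply, Matrix.mulVec, dotProduct, M]
    refine Finset.sum_congr rfl fun β _ => ?_
    rw [Equiv.symm_apply_apply]
    rw [mul_comm]
    rfl
  rw [hkey]
  exact ((Equiv.arrowCongr e.symm (Equiv.refl K)).bijective).comp hMbij
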